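/- Let n ≥ 1 and let R be the free ℤ-module with basis (E_ν)_{ν∈ℤ^n} and multiplication E_ν·E_{ν′} = E_{ν+ν′} if (ν_i−ν_j)(ν′_i−ν′_j) ≥ 0 for all i,j, and 0 otherwise. Then the ring R is reduced (it has no nonzero nilpotent elements). -/

import Mathlib

/-- `ν` and `ν'` are chamber-compatible: `(ν_i - ν_j)(ν'_i - ν'_j) ≥ 0` for all `i, j`. -/
def ChamberCompat {n : ℕ} (ν ν' : Fin n → ℤ) : Prop :=
  ∀ i j, 0 ≤ (ν i - ν j) * (ν' i - ν' j)

instance {n : ℕ} (ν ν' : Fin n → ℤ) : Decidable (ChamberCompat ν ν') :=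
  inferInstanceAs (Decidable (∀ i j, 0 ≤ (ν i - ν j) * (ν' i - ν' j)))

/-- The multiplication on `R = ⊕_{ν ∈ ℤ^n} ℤ·E_ν`, with `E_ν = Finsupp.single ν 1`:
`E_ν · E_{ν'} = E_{ν+ν'}` if `ν, ν'` are chamber-compatible, and `0` otherwise. -/
noncomputable def vmul {n : ℕ} (f g : (Fin n → ℤ) →₀ ℤ) : (Fin n → ℤ) →₀ ℤ :=
  f.sum fun ν a => g.sum fun ν' b =>
    if ChamberCompat ν ν' then Finsupp.single (ν + ν') (a * b) else 0

/-- Powers in `R` with respect to the multiplication `vmul`; `vpow f 0 = E_0` is the unit. -/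
noncomputable def vpow {n : ℕ} (f : (Fin n → ℤ) →₀ ℤ) : ℕ → ((Fin n → ℤ) →₀ ℤ)
  | 0 => Finsupp.single 0 1
  | k + 1 => vmul f (vpow f k)

section aux
variable {n : ℕ}

/-- The chamber predicate determined by `ν₀`: `ν` is nondecreasing w.r.t. the total order
refining the `ν₀`-comparison. -/
def ChP (ν₀ ν : Fin n → ℤ) : Prop :=
  ∀ i j : Fin n, (ν₀ i < ν₀ j ∨ (ν₀ i = ν₀ j ∧ i ≤ j)) → ν i ≤ ν j

instance (ν₀ ν : Fin n → ℤ) : Decidable (ChP ν₀ ν) := by unfold ChP; infer_instance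

lemma chp_self (ν₀ : Fin n → ℤ) : ChP ν₀ ν₀ := by
  intro i j h
  rcases h with h | ⟨h, _⟩ <;> omega

lemma chp_zero (ν₀ : Fin n → ℤ) : ChP ν₀ (0 : Fin n → ℤ) := by
  intro i j _; simp

lemma chp_compat {ν₀ ν ν' : Fin n → ℤ} (h : ChP ν₀ ν) (h' : ChP ν₀ ν') :
    ChamberCompat ν ν' := by
  intro i j
  rcases lt_trichotomy (ν₀ i) (ν₀ j) with hl | he | hg
  · have := h i j (Or.inl hl); have := h' i j (Or.inl hl); nlinarith
  · rcases le_total i j with hij | hij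
    · have := h i j (Or.inr ⟨he, hij⟩); have := h' i j (Or.inr ⟨he, hij⟩); nlinarith
    · have := h j i (Or.inr ⟨he.symm, hij⟩); have := h' j i (Or.inr ⟨he.symm, hij⟩); nlinarith
  · have := h j i (Or.inl hg); have := h' j i (Or.inl hg); nlinarith

lemma chp_add {ν₀ ν ν' : Fin n → ℤ} (h : ChP ν₀ ν) (h' : ChP ν₀ ν') :
    ChP ν₀ (ν + ν') := by
  intro i j hij
  have := h i j hij; have := h' i j hij
  simp only [Pi.add_apply]; omega

lemma chp_of_add {ν₀ ν ν' : Fin n → ℤ} (hc : ChamberCompat ν ν') (h : ChP ν₀ (ν + ν')) :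
    ChP ν₀ ν ∧ ChP ν₀ ν' := by
  constructor <;> intro i j hij <;>
  · have h1 := h i j hij
    have h2 := hc i j
    simp only [Pi.add_apply] at h1
    nlinarith

/-- The chamber projection, as a map into the monoid algebra. -/
noncomputable def chproj (ν₀ : Fin n → ℤ) (f : (Fin n → ℤ) →₀ ℤ) :
    AddMonoidAlgebra ℤ (Fin n → ℤ) :=
  AddMonoidAlgebra.ofCoeff (Finsupp.filter (ChP ν₀) f)

lemma vmul_single_single (ν ν' : Fin n → ℤ) (a b : ℤ) :
    vmul (Finsupp.single ν a) (Finsupp.single ν' b) =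
      if ChamberCompat ν ν' then Finsupp.single (ν + ν') (a * b) else 0 := by
  unfold vmul
  rw [Finsupp.sum_single_index, Finsupp.sum_single_index]
  · split <;> simp
  · simp

lemma vmul_zero_right (f : (Fin n → ℤ) →₀ ℤ) : vmul f 0 = 0 := by
  unfold vmul; simp [Finsupp.sum_zero_index]

lemma vmul_zero_left (g : (Fin n → ℤ) →₀ ℤ) : vmul 0 g = 0 := by
  unfold vmul; simp [Finsupp.sum_zero_index]

lemma vmul_add_right (f g g' : (Fin n → ℤ) →₀ ℤ) :
    vmul f (g + g') = vmul f g + vmul f g' := by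
  unfold vmul
  rw [← Finsupp.sum_add]
  apply Finsupp.sum_congr
  intro ν _
  apply Finsupp.sum_add_index'
  · intro ν'; split <;> simp
  · intro ν' b₁ b₂; split <;> simp [mul_add, Finsupp.single_add]

lemma vmul_add_left (f f' g : (Fin n → ℤ) →₀ ℤ) :
    vmul (f + f') g = vmul f g + vmul f' g := by
  unfold vmul
  apply Finsupp.sum_add_index'
  · intro ν; simp
  · intro ν a₁ a₂
    rw [← Finsupp.sum_add]
    apply Finsupp.sum_congr; intro ν' _
    split <;> simp [add_mul, Finsupp.single_add]

lemma chproj_vmul (ν₀ : Fin n → ℤ) (f g : (Fin n → ℤ) →₀ ℤ) :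
    chproj ν₀ (vmul f g) = chproj ν₀ f * chproj ν₀ g := by
  induction f using Finsupp.induction with
  | zero => simp [vmul_zero_left, chproj, Finsupp.filter_zero]
  | single_add ν a f hνf ha ih =>
    rw [vmul_add_left]
    unfold chproj at *
    rw [Finsupp.filter_add, Finsupp.filter_add, AddMonoidAlgebra.ofCoeff_add, AddMonoidAlgebra.ofCoeff_add, add_mul, ih]
    congr 1
    clear ih hνf ha
    induction g using Finsupp.induction with
    | zero => simp [vmul_zero_right, Finsupp.filter_zero]
    | single_add ν' b g hν'g hb ih2 =>
      rw [vmul_add_right, Finsupp.filter_add, Finsupp.filter_add, AddMonoidAlgebra.ofCoeff_add, AddMonoidAlgebra.ofCoeff_add, mul_add, ih2]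
      congr 1
      rw [vmul_single_single]
      by_cases h1 : ChP ν₀ ν
      · by_cases h2 : ChP ν₀ ν'
        · rw [Finsupp.filter_single_of_pos _ h1, Finsupp.filter_single_of_pos _ h2]
          rw [if_pos (chp_compat h1 h2)]
          rw [Finsupp.filter_single_of_pos _ (chp_add h1 h2)]
          exact (AddMonoidAlgebra.single_mul_single _ _ _ _).symm
        · rw [Finsupp.filter_single_of_neg _ h2, AddMonoidAlgebra.ofCoeff_zero, mul_zero]
          split
          · rename_i hc
            rw [Finsupp.filter_single_of_neg, AddMonoidAlgebra.ofCoeff_zero]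
            intro hs; exact h2 (chp_of_add hc hs).2
          · simp [Finsupp.filter_zero]
      · rw [Finsupp.filter_single_of_neg _ h1, AddMonoidAlgebra.ofCoeff_zero, zero_mul]
        split
        · rename_i hc
          rw [Finsupp.filter_single_of_neg, AddMonoidAlgebra.ofCoeff_zero]
          intro hs; exact h1 (chp_of_add hc hs).1
        · simp [Finsupp.filter_zero]

lemma chproj_vpow (ν₀ : Fin n → ℤ) (f : (Fin n → ℤ) →₀ ℤ) (k : ℕ) :
    chproj ν₀ (vpow f k) = (chproj ν₀ f) ^ k := by
  induction k with
  | zero =>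
    show chproj ν₀ (Finsupp.single 0 1) = 1
    unfold chproj
    rw [Finsupp.filter_single_of_pos _ (chp_zero ν₀)]
    rfl
  | succ k ih =>
    show chproj ν₀ (vmul f (vpow f k)) = _
    rw [chproj_vmul, ih, pow_succ, mul_comm]

end aux


/-- The ring `R` is reduced: it has no nonzero nilpotent elements. -/
theorem stmt5 (n : ℕ) (hn : 1 ≤ n) (f : (Fin n → ℤ) →₀ ℤ) (k : ℕ) (hk : 1 ≤ k)
    (h : vpow f k = 0) : f = 0 := by
  by_contra hf
  obtain ⟨ν₀, hν₀⟩ := Finsupp.ne_iff.mp hf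
  simp only [Finsupp.coe_zero, Pi.zero_apply] at hν₀
  have hproj : chproj ν₀ f ≠ 0 := by
    intro h0
    apply hν₀
    have h1 : (chproj ν₀ f).coeff ν₀ = 0 := by rw [h0]; rfl
    rwa [chproj, Finsupp.filter_apply_pos _ _ (chp_self ν₀)] at h1
  have : (chproj ν₀ f) ^ k = 0 := by
    rw [← chproj_vpow, h]
    simp [chproj, Finsupp.filter_zero]
  exact hproj ((pow_eq_zero_iff (by omega)).mp this)
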